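/- (Asymptotics of multinomial entropy) Let q : D → (0,1] be a probability vector on a finite set D, r(k) = Σ_d ⌈k q(d)⌉, and N_k = r(k)!/∏_d ⌈k q(d)⌉!. Then (1/k) log N_k → −Σ_{d∈D} q(d) log q(d) as k → ∞. -/

import Mathlib

set_option maxHeartbeats 1000000

open Real Filter Asymptotics

lemma log_factorial_bounds : ∀ n : ℕ, 1 ≤ n →
    (n:ℝ) * Real.log n - n + 1 ≤ Real.log (Nat.factorial n) ∧
    Real.log (Nat.factorial n) ≤ (n:ℝ) * Real.log n - n + 1 + Real.log n := by
  intro n hn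
  induction n, hn using Nat.le_induction with
  | base => simp [Nat.factorial]
  | succ n hn ih =>
    have hn0 : (0:ℝ) < n := by exact_mod_cast hn
    have hn1 : (0:ℝ) < (n:ℝ) + 1 := by positivity
    have hlog : Real.log (((n:ℝ)+1)/n) = Real.log ((n:ℝ)+1) - Real.log n :=
      Real.log_div (by positivity) (by positivity)
    have h1 : Real.log ((n:ℝ)+1) - Real.log n ≤ 1/n := by
      rw [← hlog]
      have := Real.log_le_sub_one_of_pos (x := ((n:ℝ)+1)/n) (by positivity)
      calc Real.log (((n:ℝ)+1)/n) ≤ ((n:ℝ)+1)/n - 1 := this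
        _ = 1/n := by field_simp; ring
    have h2 : 1/((n:ℝ)+1) ≤ Real.log ((n:ℝ)+1) - Real.log n := by
      have h3 := Real.log_le_sub_one_of_pos (x := (n:ℝ)/((n:ℝ)+1)) (by positivity)
      have hlog2 : Real.log ((n:ℝ)/((n:ℝ)+1)) = Real.log n - Real.log ((n:ℝ)+1) :=
        Real.log_div (by positivity) (by positivity)
      rw [hlog2] at h3
      have h4 : Real.log n - Real.log ((n:ℝ)+1) ≤ -(1/((n:ℝ)+1)) := by
        calc Real.log n - Real.log ((n:ℝ)+1) ≤ (n:ℝ)/((n:ℝ)+1) - 1 := h3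
          _ = -(1/((n:ℝ)+1)) := by field_simp; ring
      linarith
    have hfac : Real.log (Nat.factorial (n+1)) =
        Real.log ((n:ℝ)+1) + Real.log (Nat.factorial n) := by
      rw [Nat.factorial_succ]
      push_cast
      rw [Real.log_mul (by positivity) (by exact_mod_cast (Nat.factorial_pos n).ne')]
    have h1' : (n:ℝ) * (Real.log ((n:ℝ)+1) - Real.log n) ≤ 1 := by
      calc (n:ℝ) * (Real.log ((n:ℝ)+1) - Real.log n) ≤ (n:ℝ) * (1/n) :=
        mul_le_mul_of_nonneg_left h1 hn0.le
        _ = 1 := by field_simp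
    have h2' : 1 ≤ ((n:ℝ)+1) * (Real.log ((n:ℝ)+1) - Real.log n) := by
      calc (1:ℝ) = ((n:ℝ)+1) * (1/((n:ℝ)+1)) := by field_simp
        _ ≤ ((n:ℝ)+1) * (Real.log ((n:ℝ)+1) - Real.log n) :=
          mul_le_mul_of_nonneg_left h2 hn1.le
    obtain ⟨ihl, ihu⟩ := ih
    constructor
    · rw [hfac]; push_cast; nlinarith
    · rw [hfac]; push_cast; nlinarith

lemma aux_tendsto_B (c : ℝ) :
    Tendsto (fun k : ℕ => (c + (c+1) * Real.log ((k:ℝ) + c)) / k) atTop (nhds 0) := by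
  have h1 : Tendsto (fun x : ℝ => (c + (c+1) * Real.log (x + c)) / x) atTop (nhds 0) := by
    apply IsLittleO.tendsto_div_nhds_zero
    have hshift : Tendsto (fun x : ℝ => x + c) atTop atTop :=
      tendsto_atTop_add_const_right atTop c tendsto_id
    have hlog : (fun x : ℝ => Real.log (x + c)) =o[atTop] (fun x : ℝ => x + c) :=
      Real.isLittleO_log_id_atTop.comp_tendsto hshift
    have hbig : (fun x : ℝ => x + c) =O[atTop] (fun x : ℝ => x) := by
      have := (isBigO_refl (fun x : ℝ => x) atTop).add
        (Asymptotics.isLittleO_const_id_atTop (c : ℝ)).isBigO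
      simpa using this
    have hlog2 : (fun x : ℝ => Real.log (x + c)) =o[atTop] (fun x : ℝ => x) :=
      hlog.trans_isBigO hbig
    have := ((Asymptotics.isLittleO_const_id_atTop (c : ℝ)).add
      (hlog2.const_mul_left (c+1)))
    exact (by simpa using this : (fun x : ℝ => c + (c+1) * Real.log (x + c)) =o[atTop] id)
  exact h1.comp tendsto_natCast_atTop_atTop

theorem stmt_14 (D : Type*) [Fintype D]
    (q : D → ℝ) (hq0 : ∀ d, 0 < q d) (hq1 : ∀ d, q d ≤ 1) (hqsum : ∑ d, q d = 1)
    (r : ℕ → ℕ) (hr : ∀ k, r k = ∑ d, ⌈(k : ℝ) * q d⌉₊)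
    (N : ℕ → ℕ)
    (hN : ∀ k, N k = Nat.factorial (r k) / ∏ d, Nat.factorial ⌈(k : ℝ) * q d⌉₊) :
    Tendsto (fun k : ℕ => (1 / (k : ℝ)) * Real.log (N k)) atTop
      (nhds (-∑ d, q d * Real.log (q d))) := by
  classical
  set a : D → ℕ → ℕ := fun d k => ⌈(k:ℝ) * q d⌉₊ with ha
  have hDne : Nonempty D := by
    by_contra h
    rw [not_nonempty_iff] at h
    rw [Finset.univ_eq_empty, Finset.sum_empty] at hqsum
    norm_num at hqsum
  have hcard1 : 1 ≤ Fintype.card D := Fintype.card_pos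
  set c : ℝ := (Fintype.card D : ℝ) with hc
  have hc1 : 1 ≤ c := by rw [hc]; exact_mod_cast hcard1
  have hc0 : 0 ≤ c := by linarith
  have hA : ∀ d, Tendsto (fun k : ℕ => (a d k : ℝ) / k) atTop (nhds (q d)) := by
    intro d
    apply tendsto_of_tendsto_of_tendsto_of_le_of_le' (tendsto_const_nhds)
      (show Tendsto (fun k : ℕ => q d + 1/(k:ℝ)) atTop (nhds (q d)) by
        simpa using tendsto_const_nhds.add (tendsto_one_div_atTop_nhds_zero_nat (𝕜 := ℝ)))
    · filter_upwards [eventually_ge_atTop 1] with k hk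
      have hk0 : (0:ℝ) < k := by exact_mod_cast hk
      rw [le_div_iff₀ hk0, mul_comm]
      exact Nat.le_ceil _
    · filter_upwards [eventually_ge_atTop 1] with k hk
      have hk0 : (0:ℝ) < k := by exact_mod_cast hk
      rw [div_le_iff₀ hk0]
      have h1 : (a d k : ℝ) < (k:ℝ) * q d + 1 :=
        Nat.ceil_lt_add_one (mul_nonneg (Nat.cast_nonneg k) (hq0 d).le)
      calc (a d k : ℝ) ≤ (k:ℝ) * q d + 1 := h1.le
        _ = (q d + 1/k) * k := by field_simp
  have hxlog : ∀ p : ℝ, 0 < p → ContinuousAt (fun x : ℝ => x * Real.log x) p :=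
    fun p hp => continuousAt_id.mul (Real.continuousAt_log hp.ne')
  have hAL : ∀ d, Tendsto (fun k : ℕ => ((a d k : ℝ)/k) * Real.log ((a d k:ℝ)/k)) atTop
      (nhds (q d * Real.log (q d))) :=
    fun d => ((hxlog (q d) (hq0 d)).tendsto).comp (hA d)
  have hsumL : Tendsto (fun k : ℕ => ∑ d, ((a d k:ℝ)/k) * Real.log ((a d k:ℝ)/k)) atTop
      (nhds (∑ d, q d * Real.log (q d))) := tendsto_finset_sum _ (fun d _ => hAL d)
  have hR : Tendsto (fun k : ℕ => (r k : ℝ)/k) atTop (nhds 1) := by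
    have heq : (fun k : ℕ => (r k:ℝ)/k) = fun k : ℕ => ∑ d, (a d k:ℝ)/k := by
      funext k; rw [hr k]; push_cast; rw [Finset.sum_div]
    rw [heq, ← hqsum]
    exact tendsto_finset_sum _ (fun d _ => hA d)
  have hRL : Tendsto (fun k : ℕ => ((r k:ℝ)/k) * Real.log ((r k:ℝ)/k)) atTop (nhds 0) := by
    have := ((hxlog 1 one_pos).tendsto).comp hR
    simpa [Function.comp_def] using this
  set G : ℕ → ℝ := fun k => ((r k:ℝ)/k) * Real.log ((r k:ℝ)/k)
      - ∑ d, ((a d k:ℝ)/k) * Real.log ((a d k:ℝ)/k) with hG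
  have hGlim : Tendsto G atTop (nhds (-∑ d, q d * Real.log (q d))) := by
    have := hRL.sub hsumL
    simpa using this
  have hdiff : Tendsto (fun k : ℕ => 1/(k:ℝ) * Real.log (N k) - G k) atTop (nhds 0) := by
    apply squeeze_zero_norm' ?_ (aux_tendsto_B c)
    filter_upwards [eventually_ge_atTop 1] with k hk
    have hk0 : (0:ℝ) < k := by exact_mod_cast hk
    have hkq : ∀ d, (0:ℝ) < (k:ℝ) * q d := fun d => mul_pos hk0 (hq0 d)
    have ha1 : ∀ d, 0 < a d k := fun d => Nat.ceil_pos.mpr (hkq d)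
    have ha1' : ∀ d, (1:ℝ) ≤ (a d k:ℝ) := fun d => by exact_mod_cast ha1 d
    have hrk : Fintype.card D ≤ r k := by
      rw [hr k]
      calc Fintype.card D = ∑ _d : D, 1 := by simp
        _ ≤ ∑ d, ⌈(k:ℝ) * q d⌉₊ := Finset.sum_le_sum (fun d _ => ha1 d)
    have hr0 : 0 < r k := lt_of_lt_of_le hcard1 hrk
    have hr1 : (1:ℝ) ≤ (r k:ℝ) := by exact_mod_cast hr0
    have hsr : ∑ d, (a d k : ℝ) = (r k : ℝ) := by rw [hr k]; push_cast; rfl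
    have hdvd : (∏ d, Nat.factorial (a d k)) ∣ Nat.factorial (r k) := by
      rw [hr k]; exact Nat.prod_factorial_dvd_factorial_sum _ _
    have hprodpos : 0 < ∏ d, Nat.factorial (a d k) :=
      Finset.prod_pos (fun d _ => Nat.factorial_pos _)
    have hN0 : 0 < N k := by
      rw [hN k]
      exact Nat.div_pos (Nat.le_of_dvd (Nat.factorial_pos _) hdvd) hprodpos
    have hNmul : N k * ∏ d, Nat.factorial (a d k) = Nat.factorial (r k) := by
      rw [hN k]; exact Nat.div_mul_cancel hdvd
    have hlogN : Real.log (N k)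
        = Real.log ((r k).factorial) - ∑ d, Real.log ((a d k).factorial) := by
      have hcast : (N k : ℝ) * ∏ d, ((a d k).factorial : ℝ) = ((r k).factorial : ℝ) := by
        exact_mod_cast hNmul
      have hlp : Real.log (∏ d, ((a d k).factorial : ℝ))
          = ∑ d, Real.log ((a d k).factorial) :=
        Real.log_prod (fun d _ => by exact_mod_cast (Nat.factorial_pos (a d k)).ne')
      rw [← hcast, Real.log_mul (by exact_mod_cast hN0.ne')
        (Finset.prod_ne_zero_iff.mpr (fun d _ => by
          exact_mod_cast (Nat.factorial_pos (a d k)).ne')), hlp]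
      ring
    have hkne : (k:ℝ) ≠ 0 := hk0.ne'
    have hrne : (r k:ℝ) ≠ 0 := by linarith
    have hane : ∀ d, (a d k:ℝ) ≠ 0 := fun d => by have := ha1' d; linarith
    have hGk : G k = 1/(k:ℝ) * ((r k:ℝ) * Real.log (r k)
        - ∑ d, (a d k:ℝ) * Real.log (a d k)) := by
      have hsum2 : ∑ d, ((a d k:ℝ)/k) * Real.log ((a d k:ℝ)/k)
          = (∑ d, (a d k:ℝ) * Real.log (a d k))/k - (r k:ℝ)/k * Real.log k := by
        have hterm : ∀ d ∈ Finset.univ, ((a d k:ℝ)/k) * Real.log ((a d k:ℝ)/k)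
            = (a d k:ℝ) * Real.log (a d k) / k - (a d k:ℝ) * Real.log k / k := by
          intro d _
          rw [Real.log_div (hane d) hkne]
          ring
        rw [Finset.sum_congr rfl hterm, Finset.sum_sub_distrib, ← Finset.sum_div,
          ← Finset.sum_div, ← Finset.sum_mul, hsr]
        ring
      rw [hG]
      simp only []
      rw [hsum2, Real.log_div hrne hkne]
      ring
    have hur := log_factorial_bounds (r k) hr0
    have hua := fun d => log_factorial_bounds (a d k) (ha1 d)
    have hale : ∀ d, (a d k:ℝ) ≤ (r k:ℝ) := by
      intro d
      have h5 : a d k ≤ r k := by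
        rw [hr k]
        exact Finset.single_le_sum (f := fun d => ⌈(k:ℝ) * q d⌉₊)
          (fun i _ => Nat.zero_le _) (Finset.mem_univ d)
      exact_mod_cast h5
    have halogle : ∀ d, Real.log (a d k) ≤ Real.log (r k) := fun d =>
      Real.log_le_log (by have := ha1' d; linarith) (hale d)
    have hlogr0 : 0 ≤ Real.log (r k) := Real.log_nonneg hr1
    have hrle : (r k:ℝ) ≤ (k:ℝ) + c := by
      have : (r k : ℝ) = ∑ d, (a d k : ℝ) := hsr.symm
      rw [this]
      calc ∑ d, (a d k:ℝ) ≤ ∑ d, ((k:ℝ)*q d + 1) :=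
        Finset.sum_le_sum (fun d _ =>
          (Nat.ceil_lt_add_one (mul_nonneg (Nat.cast_nonneg k) (hq0 d).le)).le)
        _ = (k:ℝ) * ∑ d, q d + c := by
          rw [Finset.sum_add_distrib, ← Finset.mul_sum]
          simp [hc]
        _ = k + c := by rw [hqsum]; ring
    have hlogrle : Real.log (r k) ≤ Real.log ((k:ℝ) + c) :=
      Real.log_le_log (by linarith) hrle
    have key : |Real.log ((r k).factorial) - ∑ d, Real.log ((a d k).factorial)
        - ((r k:ℝ)*Real.log (r k) - ∑ d, (a d k:ℝ)*Real.log (a d k))|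
        ≤ c + (c+1) * Real.log (r k) := by
      set Ur := Real.log ((r k).factorial) - ((r k:ℝ)*Real.log (r k) - r k + 1) with hUr
      set Ua : D → ℝ := fun d =>
        Real.log ((a d k).factorial) - ((a d k:ℝ)*Real.log (a d k) - a d k + 1) with hUa
      have hexpr : Real.log ((r k).factorial) - ∑ d, Real.log ((a d k).factorial)
          - ((r k:ℝ)*Real.log (r k) - ∑ d, (a d k:ℝ)*Real.log (a d k))
          = Ur - ∑ d, Ua d + (1 - c) := by
        rw [hUr]
        simp only [hUa, Finset.sum_sub_distrib, Finset.sum_add_distrib, hsr,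
          Finset.sum_const, Finset.card_univ, nsmul_eq_mul, mul_one, hc]
        ring
      rw [hexpr]
      have hUr0 : 0 ≤ Ur := by have := hur.1; rw [hUr]; linarith
      have hUr1 : Ur ≤ Real.log (r k) := by have := hur.2; rw [hUr]; linarith
      have hUa0 : ∀ d, 0 ≤ Ua d := fun d => by have := (hua d).1; simp only [hUa]; linarith
      have hUa1 : ∀ d, Ua d ≤ Real.log (r k) := fun d => by
        have := (hua d).2
        have := halogle d
        simp only [hUa]; linarith
      have hS0 : 0 ≤ ∑ d, Ua d := Finset.sum_nonneg (fun d _ => hUa0 d)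
      have hS1 : ∑ d, Ua d ≤ c * Real.log (r k) := by
        calc ∑ d, Ua d ≤ ∑ _d : D, Real.log (r k) :=
          Finset.sum_le_sum (fun d _ => hUa1 d)
          _ = c * Real.log (r k) := by
            rw [Finset.sum_const, Finset.card_univ, nsmul_eq_mul, hc]
      rw [abs_le]
      constructor <;> nlinarith
    have heq2 : 1/(k:ℝ) * Real.log (N k) - G k
        = 1/(k:ℝ) * (Real.log ((r k).factorial) - ∑ d, Real.log ((a d k).factorial)
          - ((r k:ℝ)*Real.log (r k) - ∑ d, (a d k:ℝ)*Real.log (a d k))) := by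
      rw [hlogN, hGk]; ring
    rw [heq2, Real.norm_eq_abs, abs_mul, abs_of_nonneg (by positivity : (0:ℝ) ≤ 1/(k:ℝ))]
    calc 1/(k:ℝ) * |Real.log ((r k).factorial) - ∑ d, Real.log ((a d k).factorial)
          - ((r k:ℝ)*Real.log (r k) - ∑ d, (a d k:ℝ)*Real.log (a d k))|
        ≤ 1/(k:ℝ) * (c + (c+1) * Real.log (r k)) := by
          apply mul_le_mul_of_nonneg_left key (by positivity)
      _ ≤ 1/(k:ℝ) * (c + (c+1) * Real.log ((k:ℝ) + c)) := by
          apply mul_le_mul_of_nonneg_left _ (by positivity)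
          nlinarith
      _ = (c + (c+1) * Real.log ((k:ℝ) + c)) / k := by ring
  have hfinal : (fun k : ℕ => 1/(k:ℝ) * Real.log (N k))
      = fun k : ℕ => G k + (1/(k:ℝ) * Real.log (N k) - G k) := by
    funext k; ring
  rw [hfinal]
  simpa using hGlim.add hdiff
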